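/- Let X_1,…,X_{T0} be i.i.d. random matrices in ℝ^{d1×d2} with ‖X_i‖_F ≤ 1 almost surely, and let Σ = E[vec(X₁)·vec(X₁)ᵀ]. Let Θ* ∈ ℝ^{d1×d2} have rank r, with U its column space and V its row space; let M̄^⊥ be the subspace of matrices whose row space is contained in V^⊥ and column space in U^⊥, M̄ its orthogonal complement with respect to the trace inner product, and ℂ = {Δ ∈ ℝ^{d1×d2} : ‖Δ_{M̄^⊥}‖_nuc ≤ 3‖Δ_{M̄}‖_nuc}, where Δ_N is trace-orthogonal projection onto N. Suppose α0 > 0 satisfies vec(Δ)ᵀΣ·vec(Δ) ≥ α0‖Δ‖_F² for all Δ ∈ ℂ, and let C(d1,d2) = (√(α0/(4√(d1d2)) + 1) − 1)². Then for every T0 ≥ 2·log(d1²d2² + d1d2)/C(d1,d2), with probability at least 1 − exp(−T0·C(d1,d2)/4), it holds simultaneously for all Δ ∈ ℂ that (1/(2T0))·Σ_{i=1}^{T0} ⟨X_i, Δ⟩² ≥ (α0/4)·‖Δ‖_F². -/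

import Mathlib

/- STATEMENT 10 (restricted strong convexity for the low-rank matrix bandit,
Lemma C.3 of the paper).  For i.i.d. context matrices with ‖X‖_F ≤ 1 a.s. whose
vectorized population Gram matrix satisfies the restricted eigenvalue condition
over the cone ℂ (defined by nuclear-norm projections onto the low-rank subspace
pair of Θ*), after T0 ≥ 2 log(d1²d2² + d1d2)/C(d1,d2) exploration rounds, with
probability at least 1 − exp(−T0 C(d1,d2)/4), the empirical quadratic form
satisfies (1/(2T0)) Σ_i ⟨X_i, Δ⟩² ≥ (α0/4)‖Δ‖_F² simultaneously on ℂ. -/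

noncomputable section
open MeasureTheory ProbabilityTheory

instance matrixMeasurableSpace {m n : Type*} : MeasurableSpace (Matrix m n ℝ) :=
  MeasurableSpace.pi

/-- Trace inner product ⟨A, B⟩ = trace(AᵀB). -/
def frobInner {m n : Type*} [Fintype m] [Fintype n]
    (A B : Matrix m n ℝ) : ℝ := ∑ i, ∑ j, A i j * B i j

/-- Frobenius norm. -/
def frobNorm {m n : Type*} [Fintype m] [Fintype n] (A : Matrix m n ℝ) : ℝ :=
  Real.sqrt (∑ i, ∑ j, (A i j) ^ 2)

/-- Nuclear norm = sum of the singular values (square roots of the eigenvalues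
of AᵀA). -/
def nucNorm {d1 d2 : ℕ} (A : Matrix (Fin d1) (Fin d2) ℝ) : ℝ :=
  ∑ j, Real.sqrt ((Matrix.isHermitian_conjTranspose_mul_self A).eigenvalues j)

/-- Row space of a matrix: the span of its rows in ℝ^{d2}. -/
def rowSpace {d1 d2 : ℕ} (A : Matrix (Fin d1) (Fin d2) ℝ) :
    Submodule ℝ (EuclideanSpace ℝ (Fin d2)) :=
  Submodule.span ℝ (Set.range fun i => (WithLp.toLp 2 (fun j => A i j) : EuclideanSpace ℝ (Fin d2)))

/-- Column space of a matrix: the span of its columns in ℝ^{d1}. -/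
def colSpace {d1 d2 : ℕ} (A : Matrix (Fin d1) (Fin d2) ℝ) :
    Submodule ℝ (EuclideanSpace ℝ (Fin d1)) :=
  Submodule.span ℝ (Set.range fun j => (WithLp.toLp 2 (fun i => A i j) : EuclideanSpace ℝ (Fin d1)))

/-- The subspace M̄⊥ associated with `Θstar`: matrices whose row space is
contained in V⊥ and whose column space is contained in U⊥, where U and V are
the column and row spaces of `Θstar`. -/
def MbarPerp {d1 d2 : ℕ} (Θstar : Matrix (Fin d1) (Fin d2) ℝ) :
    Set (Matrix (Fin d1) (Fin d2) ℝ) :=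
  {Δ | rowSpace Δ ≤ (rowSpace Θstar)ᗮ ∧ colSpace Δ ≤ (colSpace Θstar)ᗮ}


lemma aux_exp_quad {x : ℝ} (h : |x| ≤ 1) : Real.exp x ≤ 1 + x + x^2 := by
  have h2 := Real.exp_bound h (n := 2) (by norm_num)
  have : ∑ m ∈ Finset.range 2, x ^ m / m.factorial = 1 + x := by
    simp [Finset.sum_range_succ]
  rw [this] at h2
  have h3 : |x| ^ 2 ≤ 1 * |x| ^ 2 := by nlinarith [abs_nonneg x]
  have habs : |x|^2 = x^2 := sq_abs x
  have h4 := (abs_sub_le_iff.mp h2).1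
  norm_num [Nat.factorial] at h4
  nlinarith [sq_abs x, sq_nonneg x]

lemma aux_chernoff {Ω : Type*} [MeasurableSpace Ω] {μ : Measure Ω} [IsProbabilityMeasure μ]
    {n : ℕ} {Z : Fin n → Ω → ℝ}
    (hindep : iIndepFun Z μ)
    (hmeas : ∀ i, Measurable (Z i))
    (hbound : ∀ i, ∀ᵐ ω ∂μ, |Z i ω| ≤ 2)
    (hmean : ∀ i, ∫ ω, Z i ω ∂μ = 0)
    {σ2 : ℝ} (hvar : ∀ i, ∫ ω, (Z i ω)^2 ∂μ ≤ σ2)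
    {l : ℝ} (hl0 : 0 ≤ l) (hl : l ≤ 1/2) (t : ℝ) :
    (μ {ω | (n:ℝ) * t ≤ ∑ i, Z i ω}).toReal ≤ Real.exp ((n:ℝ) * (l^2 * σ2 - l * t)) := by
  -- integrability of each exp(l * Z i)
  have hZint : ∀ i, Integrable (Z i) μ := fun i =>
    ⟨(hmeas i).aestronglyMeasurable, HasFiniteIntegral.of_bounded (C := 2) (by
      filter_upwards [hbound i] with ω hω; simpa [Real.norm_eq_abs] using hω)⟩
  have hZ2int : ∀ i, Integrable (fun ω => (Z i ω)^2) μ := fun i =>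
    ⟨((hmeas i).pow_const 2).aestronglyMeasurable, HasFiniteIntegral.of_bounded (C := 4) (by
      filter_upwards [hbound i] with ω hω
      have : (Z i ω)^2 ≤ 4 := by nlinarith [abs_nonneg (Z i ω), sq_abs (Z i ω)]
      simpa [Real.norm_eq_abs, abs_of_nonneg (sq_nonneg (Z i ω))] using this)⟩
  have hexpint : ∀ i, Integrable (fun ω => Real.exp (l * Z i ω)) μ := by
    intro i
    refine ⟨(((hmeas i).const_mul l).exp).aestronglyMeasurable,
      HasFiniteIntegral.of_bounded (C := Real.exp 1) ?_⟩
    filter_upwards [hbound i] with ω hω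
    rw [Real.norm_eq_abs, abs_of_pos (Real.exp_pos _)]
    apply Real.exp_le_exp.mpr
    calc l * Z i ω ≤ |l * Z i ω| := le_abs_self _
      _ = l * |Z i ω| := by rw [abs_mul, abs_of_nonneg hl0]
      _ ≤ (1/2) * 2 := by
          apply mul_le_mul hl hω (abs_nonneg _) (by norm_num)
      _ = 1 := by norm_num
  -- mgf bound for each i
  have hmgf : ∀ i, mgf (Z i) μ l ≤ Real.exp (l^2 * σ2) := by
    intro i
    have hpt : ∀ᵐ ω ∂μ, Real.exp (l * Z i ω) ≤ 1 + l * Z i ω + (l * Z i ω)^2 := by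
      filter_upwards [hbound i] with ω hω
      apply aux_exp_quad
      rw [abs_mul, abs_of_nonneg hl0]
      calc l * |Z i ω| ≤ (1/2) * 2 := mul_le_mul hl hω (abs_nonneg _) (by norm_num)
        _ = 1 := by norm_num
    have hint2 : Integrable (fun ω => 1 + l * Z i ω + (l * Z i ω)^2) μ := by
      apply Integrable.add
      apply Integrable.add (integrable_const 1) ((hZint i).const_mul l)
      have : (fun ω => (l * Z i ω)^2) = fun ω => l^2 * (Z i ω)^2 := by
        funext ω; ring
      rw [this]; exact (hZ2int i).const_mul _
    have h1 : mgf (Z i) μ l ≤ ∫ ω, (1 + l * Z i ω + (l * Z i ω)^2) ∂μ :=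
      integral_mono_ae (hexpint i) hint2 hpt
    have h2 : ∫ ω, (1 + l * Z i ω + (l * Z i ω)^2) ∂μ
        = 1 + l * ∫ ω, Z i ω ∂μ + l^2 * ∫ ω, (Z i ω)^2 ∂μ := by
      have e1 : (fun ω => 1 + l * Z i ω + (l * Z i ω)^2)
          = fun ω => (1 + l * Z i ω) + l^2 * (Z i ω)^2 := by funext ω; ring
      rw [e1, integral_add (by exact (integrable_const 1).add ((hZint i).const_mul l))
          ((hZ2int i).const_mul _),
        integral_add (integrable_const 1) ((hZint i).const_mul l)]
      simp [integral_const_mul]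
    rw [h2, hmean i] at h1
    have h3 : 1 + l * 0 + l^2 * ∫ ω, (Z i ω)^2 ∂μ ≤ 1 + l^2 * σ2 := by
      have := hvar i
      nlinarith [sq_nonneg l]
    calc mgf (Z i) μ l ≤ 1 + l^2 * σ2 := le_trans h1 h3
      _ ≤ Real.exp (l^2 * σ2) := by linarith [Real.add_one_le_exp (l^2 * σ2)]
  -- Chernoff
  have hsum_int : Integrable (fun ω => Real.exp (l * (∑ i, Z i) ω)) μ :=
    hindep.integrable_exp_mul_sum hmeas (fun i _ => hexpint i)
  have hch := measure_ge_le_exp_mul_mgf (X := ∑ i, Z i) (μ := μ) ((n:ℝ) * t) hl0 hsum_int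
  have hset : {ω | (n:ℝ) * t ≤ ∑ i, Z i ω} = {ω | (n:ℝ) * t ≤ (∑ i, Z i) ω} := by
    ext ω; simp [Finset.sum_apply]
  rw [hset]
  refine le_trans hch ?_
  have hmgfs : mgf (∑ i, Z i) μ l = ∏ i, mgf (Z i) μ l := hindep.mgf_sum hmeas Finset.univ
  rw [hmgfs]
  have hprod : ∏ i : Fin n, mgf (Z i) μ l ≤ ∏ i : Fin n, Real.exp (l^2 * σ2) :=
    Finset.prod_le_prod (fun i _ => mgf_nonneg) (fun i _ => hmgf i)
  have : ∏ i : Fin n, Real.exp (l^2 * σ2) = Real.exp ((n:ℝ) * (l^2 * σ2)) := by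
    rw [Finset.prod_const, ← Real.exp_nat_mul]
    simp
  calc Real.exp (-l * ((n:ℝ)*t)) * ∏ i, mgf (Z i) μ l
      ≤ Real.exp (-l * ((n:ℝ)*t)) * Real.exp ((n:ℝ) * (l^2 * σ2)) := by
        rw [this] at hprod
        exact mul_le_mul_of_nonneg_left hprod (le_of_lt (Real.exp_pos _))
    _ = Real.exp ((n:ℝ) * (l^2 * σ2 - l * t)) := by
        rw [← Real.exp_add]; ring_nf

set_option maxHeartbeats 16000000 in
theorem matrix_rsc_condition
    {d1 d2 : ℕ} (hd1 : 0 < d1) (hd2 : 0 < d2)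
    {Ω : Type*} [MeasurableSpace Ω] (μ : Measure Ω) [IsProbabilityMeasure μ]
    (T0 : ℕ) (hT0 : 0 < T0)
    (X : Fin T0 → Ω → Matrix (Fin d1) (Fin d2) ℝ)
    (hX_meas : ∀ i, Measurable (X i))
    -- i.i.d. context matrices:
    (hX_indep : iIndepFun X μ)
    (hX_ident : ∀ i j, IdentDistrib (X i) (X j) μ μ)
    (hX_bound : ∀ i, ∀ᵐ ω ∂μ, frobNorm (X i ω) ≤ 1)
    -- the target matrix of rank r:
    (Θstar : Matrix (Fin d1) (Fin d2) ℝ) (r : ℕ) (hrank : Θstar.rank = r)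
    -- PbarPerp and Pbar are the trace-orthogonal projections onto M̄⊥ and onto
    -- its orthogonal complement M̄:
    (PbarPerp Pbar : Matrix (Fin d1) (Fin d2) ℝ → Matrix (Fin d1) (Fin d2) ℝ)
    (hPbarPerp : ∀ Δ, PbarPerp Δ ∈ MbarPerp Θstar ∧
      ∀ W ∈ MbarPerp Θstar, frobInner (Δ - PbarPerp Δ) W = 0)
    (hPbar : ∀ Δ, (∀ W ∈ MbarPerp Θstar, frobInner (Pbar Δ) W = 0) ∧
      ∀ W : Matrix (Fin d1) (Fin d2) ℝ,
        (∀ W' ∈ MbarPerp Θstar, frobInner W W' = 0) → frobInner (Δ - Pbar Δ) W = 0)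
    -- the vectorized population Gram matrix:
    (Sig : Matrix (Fin d1 × Fin d2) (Fin d1 × Fin d2) ℝ)
    (hSig : ∀ a b, Sig a b = ∫ ω, X ⟨0, hT0⟩ ω a.1 a.2 * X ⟨0, hT0⟩ ω b.1 b.2 ∂μ)
    -- restricted eigenvalue condition on the cone ℂ:
    (α0 : ℝ) (hα0 : 0 < α0)
    (hRE : ∀ Δ : Matrix (Fin d1) (Fin d2) ℝ,
      nucNorm (PbarPerp Δ) ≤ 3 * nucNorm (Pbar Δ) →
      α0 * ∑ i, ∑ j, (Δ i j) ^ 2 ≤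
        ∑ a : Fin d1 × Fin d2, ∑ b : Fin d1 × Fin d2, Δ a.1 a.2 * Sig a b * Δ b.1 b.2)
    -- T0 large enough:
    (hT0_big : 2 * Real.log ((d1 : ℝ) ^ 2 * (d2 : ℝ) ^ 2 + d1 * d2) /
      ((Real.sqrt (α0 / (4 * Real.sqrt (d1 * d2)) + 1) - 1) ^ 2) ≤ (T0 : ℝ)) :
    1 - Real.exp (-((T0 : ℝ) *
        (Real.sqrt (α0 / (4 * Real.sqrt (d1 * d2)) + 1) - 1) ^ 2) / 4) ≤
      (μ {ω | ∀ Δ : Matrix (Fin d1) (Fin d2) ℝ,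
        nucNorm (PbarPerp Δ) ≤ 3 * nucNorm (Pbar Δ) →
        (α0 / 4) * ∑ i, ∑ j, (Δ i j) ^ 2 ≤
          (1 / (2 * (T0 : ℝ))) * ∑ i, (frobInner (X i ω) Δ) ^ 2}).toReal := by
  classical
  have hT0R : (0:ℝ) < (T0:ℝ) := by exact_mod_cast hT0
  set s : ℝ := Real.sqrt ((d1:ℝ) * (d2:ℝ)) with hs_def
  set u : ℝ := Real.sqrt (α0 / (4 * s) + 1) - 1 with hu_def
  have hd1R : (1:ℝ) ≤ (d1:ℝ) := by exact_mod_cast hd1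
  have hd2R : (1:ℝ) ≤ (d2:ℝ) := by exact_mod_cast hd2
  have hd1d2 : (1:ℝ) ≤ (d1:ℝ) * (d2:ℝ) := by nlinarith
  have hs1 : 1 ≤ s := by
    have h := Real.sqrt_le_sqrt hd1d2
    rw [Real.sqrt_one] at h
    rw [hs_def]; exact h
  have hs0 : 0 < s := lt_of_lt_of_le one_pos hs1
  have hs2 : s^2 = (d1:ℝ)*(d2:ℝ) := Real.sq_sqrt (by linarith)
  have hu_pos : 0 < u := by
    rw [hu_def]
    have h1 : 0 < α0/(4*s) := div_pos hα0 (by linarith)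
    have h2 : Real.sqrt 1 < Real.sqrt (α0/(4*s) + 1) :=
      Real.sqrt_lt_sqrt (by norm_num) (by linarith)
    rw [Real.sqrt_one] at h2
    linarith
  have huu : u^2 + 2*u = α0/(4*s) := by
    have h := Real.sq_sqrt (show 0 ≤ α0/(4*s)+1 by positivity)
    rw [hu_def]
    linear_combination h
  have h2u : 2*u ≤ α0/(4*s) := by nlinarith [sq_nonneg u]
  have hdivs : (α0/(4*s))*s = α0/4 := by
    have hsne : s ≠ 0 := ne_of_gt hs0
    field_simp
  have hus : u * s ≤ α0 / 8 := by
    have h1 : (2*u)*s ≤ (α0/(4*s))*s := mul_le_mul_of_nonneg_right h2u hs0.le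
    rw [hdivs] at h1; linarith
  clear_value s u
  -- degenerate cone case
  by_cases hco : ∀ Δ : Matrix (Fin d1) (Fin d2) ℝ,
      nucNorm (PbarPerp Δ) ≤ 3 * nucNorm (Pbar Δ) → Δ = 0
  · have hset : {ω | ∀ Δ : Matrix (Fin d1) (Fin d2) ℝ,
        nucNorm (PbarPerp Δ) ≤ 3 * nucNorm (Pbar Δ) →
        (α0 / 4) * ∑ i, ∑ j, (Δ i j) ^ 2 ≤
          (1 / (2 * (T0 : ℝ))) * ∑ i, (frobInner (X i ω) Δ) ^ 2} = Set.univ := by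
      apply Set.eq_univ_of_forall
      intro ω Δ hΔ
      have h0 := hco Δ hΔ
      subst h0
      simp [frobInner]
    rw [hset]
    simp only [measure_univ, ENNReal.toReal_one]
    linarith [Real.exp_pos (-((T0:ℝ) * u^2) / 4)]
  push_neg at hco
  obtain ⟨Δ0, hΔ0c, hΔ0ne⟩ := hco
  -- measurability of coordinates
  have hMe : ∀ a : Fin d1 × Fin d2,
      Measurable (fun M : Matrix (Fin d1) (Fin d2) ℝ => M a.1 a.2) := by
    intro a
    exact (measurable_pi_apply a.2).comp (measurable_pi_apply a.1)
  have hYm : ∀ (i : Fin T0) (a : Fin d1 × Fin d2), Measurable (fun ω => X i ω a.1 a.2) :=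
    fun i a => (hMe a).comp (hX_meas i)
  -- key definitions
  set P : Fin T0 → (Fin d1 × Fin d2) × (Fin d1 × Fin d2) → Ω → ℝ :=
    fun i e ω => X i ω e.1.1 e.1.2 * X i ω e.2.1 e.2.2 with hP_def
  set m : (Fin d1 × Fin d2) × (Fin d1 × Fin d2) → ℝ := fun e => Sig e.1 e.2 with hm_def
  set v : (Fin d1 × Fin d2) × (Fin d1 × Fin d2) → ℝ :=
    fun e => ∫ ω, (P ⟨0, hT0⟩ e ω - m e)^2 ∂μ with hv_def
  set th : (Fin d1 × Fin d2) × (Fin d1 × Fin d2) → ℝ :=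
    fun e => (9/4)*u*Real.sqrt (v e) + 5*u^2 with hth_def
  set G : (Fin d1 × Fin d2) × (Fin d1 × Fin d2) → Ω → ℝ :=
    fun e ω => ∑ i, P i e ω with hG_def
  set Estar : Set Ω :=
    {ω | ∀ e, |G e ω - (T0:ℝ) * m e| ≤ (T0:ℝ) * th e} with hE_def
  clear_value P m v th G Estar
  have hPm : ∀ i e, Measurable (P i e) := by
    intro i e
    simp only [hP_def]
    exact (hYm i e.1).mul (hYm i e.2)
  -- a.s. bounds
  have hsum1 : ∀ i, ∀ᵐ ω ∂μ, ∑ a : Fin d1 × Fin d2, (X i ω a.1 a.2)^2 ≤ 1 := by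
    intro i
    filter_upwards [hX_bound i] with ω hω
    simp only [frobNorm] at hω
    have h0 : 0 ≤ ∑ i', ∑ j, (X i ω i' j)^2 := by positivity
    have h1 : ∑ i', ∑ j, (X i ω i' j)^2 ≤ 1 := by
      nlinarith [Real.sq_sqrt h0, Real.sqrt_nonneg (∑ i', ∑ j, (X i ω i' j)^2)]
    rw [Fintype.sum_prod_type]
    exact h1
  have hY1 : ∀ (i : Fin T0) (a : Fin d1 × Fin d2), ∀ᵐ ω ∂μ, |X i ω a.1 a.2| ≤ 1 := by
    intro i a
    filter_upwards [hsum1 i] with ω hω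
    have h1 : (X i ω a.1 a.2)^2 ≤ 1 :=
      le_trans (Finset.single_le_sum (f := fun a : Fin d1 × Fin d2 => (X i ω a.1 a.2)^2)
        (fun _ _ => sq_nonneg _) (Finset.mem_univ a)) hω
    nlinarith [abs_nonneg (X i ω a.1 a.2), sq_abs (X i ω a.1 a.2)]
  have hP1 : ∀ i e, ∀ᵐ ω ∂μ, |P i e ω| ≤ 1 := by
    intro i e
    filter_upwards [hY1 i e.1, hY1 i e.2] with ω h1 h2
    have : |P i e ω| = |X i ω e.1.1 e.1.2| * |X i ω e.2.1 e.2.2| := by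
      rw [hP_def, abs_mul]
    rw [this]
    exact mul_le_one₀ h1 (abs_nonneg _) h2
  have hPint : ∀ i e, Integrable (P i e) μ := by
    intro i e
    exact ⟨(hPm i e).aestronglyMeasurable, HasFiniteIntegral.of_bounded (C := 1) (by
      filter_upwards [hP1 i e] with ω hω; simpa [Real.norm_eq_abs] using hω)⟩
  have hP2int : ∀ i e, Integrable (fun ω => (P i e ω)^2) μ := by
    intro i e
    refine ⟨((hPm i e).pow_const 2).aestronglyMeasurable,
      HasFiniteIntegral.of_bounded (C := 1) ?_⟩
    filter_upwards [hP1 i e] with ω hω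
    rw [Real.norm_eq_abs, abs_of_nonneg (sq_nonneg _)]
    nlinarith [abs_nonneg (P i e ω), sq_abs (P i e ω)]
  have hm_int : ∀ e, m e = ∫ ω, P ⟨0, hT0⟩ e ω ∂μ := by
    intro e; simp only [hm_def, hP_def]; exact hSig e.1 e.2
  have hm1 : ∀ e, |m e| ≤ 1 := by
    intro e
    rw [hm_int e]
    have hb : ∀ᵐ ω ∂μ, ‖P ⟨0, hT0⟩ e ω‖ ≤ 1 := by
      filter_upwards [hP1 ⟨0, hT0⟩ e] with ω hω
      simpa [Real.norm_eq_abs] using hω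
    have := norm_integral_le_of_norm_le_const (C := 1) (μ := μ) (f := P ⟨0, hT0⟩ e) hb
    simpa [Real.norm_eq_abs] using this
  have hident : ∀ i e, ∀ g : ℝ → ℝ, Measurable g →
      ∫ ω, g (P i e ω) ∂μ = ∫ ω, g (P ⟨0, hT0⟩ e ω) ∂μ := by
    intro i e g hg
    simp only [hP_def]
    have h2 : Measurable (fun M : Matrix (Fin d1) (Fin d2) ℝ =>
        g (M e.1.1 e.1.2 * M e.2.1 e.2.2)) := hg.comp ((hMe e.1).mul (hMe e.2))
    have h1 := ((hX_ident i ⟨0, hT0⟩).comp h2).integral_eq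
    simpa [Function.comp] using h1
  have hPmean : ∀ i e, ∫ ω, P i e ω ∂μ = m e := by
    intro i e
    rw [hm_int e]
    exact hident i e id measurable_id
  have hv_nonneg : ∀ e, 0 ≤ v e := by
    intro e; rw [hv_def]; exact integral_nonneg (fun ω => sq_nonneg _)
  have hPvar : ∀ i e, ∫ ω, (P i e ω - m e)^2 ∂μ = v e := by
    intro i e
    rw [hv_def]
    exact hident i e (fun x => (x - m e)^2) ((measurable_id.sub_const _).pow_const 2)
  have hth_pos : ∀ e, 0 < th e := by
    intro e
    simp only [hth_def]
    have h1 : 0 ≤ (9/4)*u*Real.sqrt (v e) :=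
      mul_nonneg (mul_nonneg (by norm_num) hu_pos.le) (Real.sqrt_nonneg _)
    have h2 : 0 < u^2 := pow_pos hu_pos 2
    exact add_pos_of_nonneg_of_pos h1 (by linarith)
  -- sum of variances at most 1
  have hsv : ∑ e : (Fin d1 × Fin d2) × (Fin d1 × Fin d2), v e ≤ 1 := by
    have hvle : ∀ e, v e ≤ ∫ ω, (P ⟨0, hT0⟩ e ω)^2 ∂μ := by
      intro e
      have hexpand : (fun ω => (P ⟨0, hT0⟩ e ω - m e)^2)
          = fun ω => ((P ⟨0, hT0⟩ e ω)^2 - (2*m e) * P ⟨0, hT0⟩ e ω) + (m e)^2 := by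
        funext ω; ring
      have hint1 : Integrable (fun ω => (P ⟨0, hT0⟩ e ω)^2 - (2*m e) * P ⟨0, hT0⟩ e ω) μ :=
        (hP2int _ e).sub ((hPint _ e).const_mul _)
      have h2 : v e = (∫ ω, (P ⟨0, hT0⟩ e ω)^2 ∂μ) - (m e)^2 := by
        simp only [hv_def]
        rw [hexpand, integral_add hint1 (integrable_const _),
          integral_sub (hP2int _ e) ((hPint _ e).const_mul _), integral_const_mul,
          hPmean _ e, integral_const]
        simp
        ring
      have := sq_nonneg (m e)
      linarith
    have hsum2 : ∑ e : (Fin d1 × Fin d2) × (Fin d1 × Fin d2), ∫ ω, (P ⟨0, hT0⟩ e ω)^2 ∂μ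
        = ∫ ω, ∑ e : (Fin d1 × Fin d2) × (Fin d1 × Fin d2), (P ⟨0, hT0⟩ e ω)^2 ∂μ :=
      (integral_finset_sum _ (fun e _ => hP2int _ e)).symm
    have hptw : ∀ᵐ ω ∂μ, ∑ e : (Fin d1 × Fin d2) × (Fin d1 × Fin d2),
        (P ⟨0, hT0⟩ e ω)^2 ≤ 1 := by
      filter_upwards [hsum1 ⟨0, hT0⟩] with ω hω
      have hid : ∑ e : (Fin d1 × Fin d2) × (Fin d1 × Fin d2), (P ⟨0, hT0⟩ e ω)^2
          = (∑ a : Fin d1 × Fin d2, (X ⟨0, hT0⟩ ω a.1 a.2)^2)^2 := by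
        calc ∑ e : (Fin d1 × Fin d2) × (Fin d1 × Fin d2), (P ⟨0, hT0⟩ e ω)^2
            = ∑ a : Fin d1 × Fin d2, ∑ b : Fin d1 × Fin d2,
              (X ⟨0, hT0⟩ ω a.1 a.2)^2 * (X ⟨0, hT0⟩ ω b.1 b.2)^2 := by
              simp only [hP_def]
              rw [Fintype.sum_prod_type]
              exact Finset.sum_congr rfl (fun a _ => Finset.sum_congr rfl (fun b _ => by ring))
          _ = (∑ a : Fin d1 × Fin d2, (X ⟨0, hT0⟩ ω a.1 a.2)^2)
              * (∑ b : Fin d1 × Fin d2, (X ⟨0, hT0⟩ ω b.1 b.2)^2) :=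
              (Finset.sum_mul_sum _ _ _ _).symm
          _ = (∑ a : Fin d1 × Fin d2, (X ⟨0, hT0⟩ ω a.1 a.2)^2)^2 := (sq _).symm
      rw [hid]
      have hnn : 0 ≤ ∑ a : Fin d1 × Fin d2, (X ⟨0, hT0⟩ ω a.1 a.2)^2 :=
        Finset.sum_nonneg (fun a _ => sq_nonneg _)
      nlinarith
    have hint3 : Integrable (fun ω => ∑ e : (Fin d1 × Fin d2) × (Fin d1 × Fin d2),
        (P ⟨0, hT0⟩ e ω)^2) μ := integrable_finset_sum _ (fun e _ => hP2int _ e)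
    calc ∑ e : (Fin d1 × Fin d2) × (Fin d1 × Fin d2), v e
        ≤ ∑ e : (Fin d1 × Fin d2) × (Fin d1 × Fin d2), ∫ ω, (P ⟨0, hT0⟩ e ω)^2 ∂μ :=
          Finset.sum_le_sum (fun e _ => hvle e)
      _ = ∫ ω, ∑ e : (Fin d1 × Fin d2) × (Fin d1 × Fin d2), (P ⟨0, hT0⟩ e ω)^2 ∂μ := hsum2
      _ ≤ ∫ _, (1:ℝ) ∂μ := integral_mono_ae hint3 (integrable_const 1) hptw
      _ = 1 := by simp
  -- sum of squared thresholds at most α0²/4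
  have hα1 : α0 ≤ 1 := by
    have hS0 : (0:ℝ) < ∑ i, ∑ j, (Δ0 i j)^2 := by
      have hex : ∃ i j, Δ0 i j ≠ 0 := by
        by_contra hcc
        push_neg at hcc
        exact hΔ0ne (by ext i j; simpa using hcc i j)
      obtain ⟨i0, j0, hne⟩ := hex
      have h1 : 0 < (Δ0 i0 j0)^2 := lt_of_le_of_ne (sq_nonneg _) (Ne.symm (pow_ne_zero 2 hne))
      have h2 : (Δ0 i0 j0)^2 ≤ ∑ j, (Δ0 i0 j)^2 :=
        Finset.single_le_sum (f := fun j => (Δ0 i0 j)^2)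
          (fun _ _ => sq_nonneg _) (Finset.mem_univ j0)
      have h3 : ∑ j, (Δ0 i0 j)^2 ≤ ∑ i, ∑ j, (Δ0 i j)^2 :=
        Finset.single_le_sum (f := fun i => ∑ j, (Δ0 i j)^2)
          (fun _ _ => Finset.sum_nonneg fun _ _ => sq_nonneg _) (Finset.mem_univ i0)
      linarith
    have hre := hRE Δ0 hΔ0c
    have hIint : ∀ a b : Fin d1 × Fin d2, Integrable (fun ω => (Δ0 a.1 a.2 * Δ0 b.1 b.2) *
        (X ⟨0, hT0⟩ ω a.1 a.2 * X ⟨0, hT0⟩ ω b.1 b.2)) μ := by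
      intro a b
      have := hPint ⟨0, hT0⟩ (a, b)
      simp only [hP_def] at this
      exact this.const_mul _
    have h1 : ∀ a b : Fin d1 × Fin d2, Δ0 a.1 a.2 * Sig a b * Δ0 b.1 b.2
        = ∫ ω, (Δ0 a.1 a.2 * Δ0 b.1 b.2) *
            (X ⟨0, hT0⟩ ω a.1 a.2 * X ⟨0, hT0⟩ ω b.1 b.2) ∂μ := by
      intro a b
      rw [integral_const_mul, ← hSig a b]
      ring
    have hrhs : ∑ a : Fin d1 × Fin d2, ∑ b : Fin d1 × Fin d2,
        Δ0 a.1 a.2 * Sig a b * Δ0 b.1 b.2 ≤ ∑ i, ∑ j, (Δ0 i j)^2 := by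
      have h2 : ∑ a : Fin d1 × Fin d2, ∑ b : Fin d1 × Fin d2,
          Δ0 a.1 a.2 * Sig a b * Δ0 b.1 b.2
          = ∫ ω, ∑ a : Fin d1 × Fin d2, ∑ b : Fin d1 × Fin d2,
              (Δ0 a.1 a.2 * Δ0 b.1 b.2) *
              (X ⟨0, hT0⟩ ω a.1 a.2 * X ⟨0, hT0⟩ ω b.1 b.2) ∂μ := by
        have hstep : ∀ a : Fin d1 × Fin d2, ∑ b : Fin d1 × Fin d2,
            ∫ ω, (Δ0 a.1 a.2 * Δ0 b.1 b.2) *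
              (X ⟨0, hT0⟩ ω a.1 a.2 * X ⟨0, hT0⟩ ω b.1 b.2) ∂μ
            = ∫ ω, ∑ b : Fin d1 × Fin d2, (Δ0 a.1 a.2 * Δ0 b.1 b.2) *
              (X ⟨0, hT0⟩ ω a.1 a.2 * X ⟨0, hT0⟩ ω b.1 b.2) ∂μ :=
          fun a => (integral_finset_sum _ (fun b _ => hIint a b)).symm
        simp_rw [h1, hstep]
        exact (integral_finset_sum _ (fun a _ =>
          integrable_finset_sum _ (fun b _ => hIint a b))).symm
      rw [h2]
      have hpt : ∀ᵐ ω ∂μ, ∑ a : Fin d1 × Fin d2, ∑ b : Fin d1 × Fin d2,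
          (Δ0 a.1 a.2 * Δ0 b.1 b.2) * (X ⟨0, hT0⟩ ω a.1 a.2 * X ⟨0, hT0⟩ ω b.1 b.2)
          ≤ ∑ i, ∑ j, (Δ0 i j)^2 := by
        filter_upwards [hsum1 ⟨0, hT0⟩] with ω hω
        have hid : ∑ a : Fin d1 × Fin d2, ∑ b : Fin d1 × Fin d2,
            (Δ0 a.1 a.2 * Δ0 b.1 b.2) * (X ⟨0, hT0⟩ ω a.1 a.2 * X ⟨0, hT0⟩ ω b.1 b.2)
            = (∑ a : Fin d1 × Fin d2, Δ0 a.1 a.2 * X ⟨0, hT0⟩ ω a.1 a.2)^2 := by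
          rw [sq, Finset.sum_mul_sum]
          exact Finset.sum_congr rfl (fun a _ => Finset.sum_congr rfl (fun b _ => by ring))
        rw [hid]
        have hcs := Finset.sum_mul_sq_le_sq_mul_sq Finset.univ
          (fun a : Fin d1 × Fin d2 => Δ0 a.1 a.2) (fun a => X ⟨0, hT0⟩ ω a.1 a.2)
        have hS0' : ∑ a : Fin d1 × Fin d2, (Δ0 a.1 a.2)^2 = ∑ i, ∑ j, (Δ0 i j)^2 := by
          rw [Fintype.sum_prod_type]
        have hnn : 0 ≤ ∑ a : Fin d1 × Fin d2, (Δ0 a.1 a.2)^2 :=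
          Finset.sum_nonneg fun _ _ => sq_nonneg _
        nlinarith [hcs, hω, hS0', hnn]
      have hint4 : Integrable (fun ω => ∑ a : Fin d1 × Fin d2, ∑ b : Fin d1 × Fin d2,
          (Δ0 a.1 a.2 * Δ0 b.1 b.2) * (X ⟨0, hT0⟩ ω a.1 a.2 * X ⟨0, hT0⟩ ω b.1 b.2)) μ :=
        integrable_finset_sum _ (fun a _ =>
          integrable_finset_sum _ (fun b _ => hIint a b))
      calc ∫ ω, ∑ a : Fin d1 × Fin d2, ∑ b : Fin d1 × Fin d2,
            (Δ0 a.1 a.2 * Δ0 b.1 b.2) *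
            (X ⟨0, hT0⟩ ω a.1 a.2 * X ⟨0, hT0⟩ ω b.1 b.2) ∂μ
          ≤ ∫ _, ∑ i, ∑ j, (Δ0 i j)^2 ∂μ :=
            integral_mono_ae hint4 (integrable_const _) hpt
        _ = ∑ i, ∑ j, (Δ0 i j)^2 := by simp
    nlinarith [hre, hrhs, hS0]
  have hst2 : ∑ e : (Fin d1 × Fin d2) × (Fin d1 × Fin d2), (th e)^2 ≤ α0^2/4 := by
    have hth2 : ∀ e, (th e)^2 ≤ (81/8)*u^2*(v e) + 50*u^4 := by
      intro e
      simp only [hth_def]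
      have h := Real.sq_sqrt (hv_nonneg e)
      nlinarith [Real.sqrt_nonneg (v e), sq_nonneg ((9/4)*u*Real.sqrt (v e) - 5*u^2),
        hu_pos.le, sq_nonneg u]
    have hcard : ((Finset.univ : Finset ((Fin d1 × Fin d2) × (Fin d1 × Fin d2))).card : ℝ)
        = ((d1:ℝ)*(d2:ℝ))^2 := by
      simp [Finset.card_univ]
      push_cast
      ring
    calc ∑ e : (Fin d1 × Fin d2) × (Fin d1 × Fin d2), (th e)^2
        ≤ ∑ e : (Fin d1 × Fin d2) × (Fin d1 × Fin d2), ((81/8)*u^2*(v e) + 50*u^4) :=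
          Finset.sum_le_sum (fun e _ => hth2 e)
      _ = (81/8)*u^2*(∑ e : (Fin d1 × Fin d2) × (Fin d1 × Fin d2), v e)
          + 50*u^4 * ((d1:ℝ)*(d2:ℝ))^2 := by
          rw [Finset.sum_add_distrib, ← Finset.mul_sum, Finset.sum_const, nsmul_eq_mul, hcard]
          ring
      _ ≤ (81/8)*u^2 + 50*u^4*((d1:ℝ)*(d2:ℝ))^2 := by
          nlinarith [sq_nonneg u, hsv, mul_le_mul_of_nonneg_left hsv
            (by positivity : (0:ℝ) ≤ (81/8)*u^2)]
      _ ≤ α0^2/4 := by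
          have h1 : u^2 ≤ (u*s)^2 := by nlinarith [hu_pos.le, hs1, pow_pos hu_pos 2]
          have h2 : (u*s)^2 ≤ (α0/8)^2 := by
            nlinarith [mul_nonneg hu_pos.le hs0.le, hus]
          have h3 : u^4*((d1:ℝ)*(d2:ℝ))^2 = ((u*s)^2)^2 := by rw [← hs2]; ring
          have h4 : ((u*s)^2)^2 ≤ (α0/8)^4 := by nlinarith [sq_nonneg (u*s), h2]
          have hsq1 : α0^2 ≤ 1 := by nlinarith
          have h5 : α0^4 ≤ α0^2 := by nlinarith [sq_nonneg α0, hsq1]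
          have h6 : 50*(u^4*((d1:ℝ)*(d2:ℝ))^2) ≤ 50*(α0/8)^4 := by rw [h3]; linarith
          nlinarith [h1, h2, h5, h6]
  -- measurability of the good event
  have hGm : ∀ e, Measurable (G e) := by
    intro e
    rw [hG_def]
    exact Finset.measurable_sum _ (fun i _ => hPm i e)
  have hEm : MeasurableSet Estar := by
    have : Estar = ⋂ e, {ω | |G e ω - (T0:ℝ) * m e| ≤ (T0:ℝ) * th e} := by
      ext ω; simp [hE_def, Set.mem_iInter]
    rw [this]
    exact MeasurableSet.iInter fun e =>
      measurableSet_le (((hGm e).sub_const _).abs) measurable_const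
  -- the bad events and their probabilities
  set sgn : Bool → ℝ := fun b => if b then 1 else -1 with hsgn_def
  set Z : ((Fin d1 × Fin d2) × (Fin d1 × Fin d2)) × Bool → Fin T0 → Ω → ℝ :=
    fun k i ω => sgn k.2 * (P i k.1 ω - m k.1) with hZ_def
  set Bad : ((Fin d1 × Fin d2) × (Fin d1 × Fin d2)) × Bool → Set Ω :=
    fun k => {ω | (T0:ℝ) * th k.1 ≤ ∑ i, Z k i ω} with hB_def
  clear_value sgn Z Bad
  have hZsum : ∀ k ω, ∑ i, Z k i ω = sgn k.2 * (G k.1 ω - (T0:ℝ) * m k.1) := by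
    intro k ω
    rw [hG_def]
    simp only [hZ_def]
    rw [← Finset.mul_sum]
    congr 1
    rw [Finset.sum_sub_distrib, Finset.sum_const, Finset.card_univ, Fintype.card_fin,
      nsmul_eq_mul]
  have hcover : Estarᶜ ⊆ ⋃ k, Bad k := by
    intro ω hω
    simp only [hE_def, Set.mem_compl_iff, Set.mem_setOf_eq, not_forall, not_le] at hω
    obtain ⟨e, he⟩ := hω
    rcases le_abs.mp he.le with h | h
    · refine Set.mem_iUnion.mpr ⟨(e, true), ?_⟩
      simp only [hB_def, Set.mem_setOf_eq, hZsum]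
      simp [hsgn_def]
      linarith
    · refine Set.mem_iUnion.mpr ⟨(e, false), ?_⟩
      simp only [hB_def, Set.mem_setOf_eq, hZsum]
      simp [hsgn_def]
      linarith
  have hbad : ∀ k, (μ (Bad k)).toReal ≤ Real.exp (-(5/4)*(T0:ℝ)*u^2) := by
    rintro ⟨e, b⟩
    have hsgn2 : (sgn b)^2 = 1 := by
      rcases b <;> simp [hsgn_def]
    have hsgnabs : |sgn b| = 1 := by
      rcases b <;> simp [hsgn_def]
    have hZmeas : ∀ i, Measurable (Z (e, b) i) := by
      intro i
      simp only [hZ_def]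
      exact ((hPm i e).sub_const _).const_mul _
    have hZindep : iIndepFun (fun i => Z (e, b) i) μ := by
      have hg : Measurable (fun M : Matrix (Fin d1) (Fin d2) ℝ =>
          sgn b * (M e.1.1 e.1.2 * M e.2.1 e.2.2 - m e)) :=
        (((hMe e.1).mul (hMe e.2)).sub_const _).const_mul _
      have := hX_indep.comp (fun _ => fun M : Matrix (Fin d1) (Fin d2) ℝ =>
        sgn b * (M e.1.1 e.1.2 * M e.2.1 e.2.2 - m e)) (fun _ => hg)
      convert this using 2 with i
      funext ω
      simp only [hZ_def, hP_def, Function.comp]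
    have hZbound : ∀ i, ∀ᵐ ω ∂μ, |Z (e, b) i ω| ≤ 2 := by
      intro i
      filter_upwards [hP1 i e] with ω h1
      simp only [hZ_def]
      rw [abs_mul, hsgnabs, one_mul]
      have h3 := abs_add_le (P i e ω) (-(m e))
      rw [abs_neg] at h3
      rw [sub_eq_add_neg]
      linarith [hm1 e]
    have hZmean : ∀ i, ∫ ω, Z (e, b) i ω ∂μ = 0 := by
      intro i
      simp only [hZ_def]
      rw [integral_const_mul, integral_sub (hPint i e) (integrable_const _),
        hPmean i e, integral_const]
      simp
    have hZvar : ∀ i, ∫ ω, (Z (e, b) i ω)^2 ∂μ ≤ v e := by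
      intro i
      have heq : (fun ω => (Z (e, b) i ω)^2) = fun ω => (P i e ω - m e)^2 := by
        funext ω
        simp only [hZ_def]
        rw [mul_pow, hsgn2, one_mul]
      have h2 : ∫ ω, (Z (e, b) i ω)^2 ∂μ = v e := by
        rw [show (fun ω => (Z (e, b) i ω)^2) = fun ω => (P i e ω - m e)^2 from heq]
        exact hPvar i e
      exact h2.le
    have hsetB : Bad (e, b) = {ω | (T0:ℝ) * th e ≤ ∑ i, Z (e, b) i ω} := by
      simp [hB_def]
    have hth5 : 5*u^2 ≤ th e := by
      simp only [hth_def]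
      nlinarith [mul_nonneg (mul_nonneg (by norm_num : (0:ℝ) ≤ 9/4) hu_pos.le)
        (Real.sqrt_nonneg (v e))]
    by_cases hc : th e ≤ v e
    · -- Bernstein regime: l := th e / (2 v e)
      have hvpos : 0 < v e := lt_of_lt_of_le (hth_pos e) hc
      have hl0 : 0 ≤ th e / (2*(v e)) := div_nonneg (hth_pos e).le (by linarith)
      have hl : th e / (2*(v e)) ≤ 1/2 := by
        rw [div_le_div_iff₀ (by linarith) (by norm_num)]
        linarith
      have hch := aux_chernoff hZindep hZmeas hZbound hZmean hZvar hl0 hl (th e)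
      rw [hsetB]
      refine le_trans hch (Real.exp_le_exp.mpr ?_)
      have he1 : (th e/(2*(v e)))^2 * (v e) - (th e/(2*(v e)))*(th e)
          = -((th e)^2/(4*(v e))) := by
        field_simp
        ring
      have he2 : (81/16)*u^2*(v e) ≤ (th e)^2 := by
        simp only [hth_def]
        nlinarith [Real.sq_sqrt (hv_nonneg e),
          mul_nonneg (mul_nonneg (by norm_num : (0:ℝ) ≤ 9/4) hu_pos.le)
            (Real.sqrt_nonneg (v e)), sq_nonneg u, hu_pos.le]
      have he3 : (5/4)*u^2 ≤ (th e)^2/(4*(v e)) := by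
        rw [le_div_iff₀ (by linarith)]
        nlinarith [he2, mul_nonneg (sq_nonneg u) (hv_nonneg e)]
      calc (T0:ℝ) * ((th e/(2*(v e)))^2 * (v e) - (th e/(2*(v e)))*(th e))
          = (T0:ℝ) * (-((th e)^2/(4*(v e)))) := by rw [he1]
        _ ≤ (T0:ℝ) * (-((5/4)*u^2)) :=
            mul_le_mul_of_nonneg_left (by linarith) hT0R.le
        _ = -(5/4)*(T0:ℝ)*u^2 := by ring
    · -- bounded regime: l := 1/2
      push_neg at hc
      have hch := aux_chernoff hZindep hZmeas hZbound hZmean hZvar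
        (by norm_num : (0:ℝ) ≤ 1/2) (le_refl (1/2 : ℝ)) (th e)
      rw [hsetB]
      refine le_trans hch (Real.exp_le_exp.mpr ?_)
      calc (T0:ℝ) * (((1:ℝ)/2)^2 * (v e) - (1/2)*(th e))
          ≤ (T0:ℝ) * (-((5/4)*u^2)) := by
            apply mul_le_mul_of_nonneg_left _ hT0R.le
            nlinarith [hc, hth5]
        _ = -(5/4)*(T0:ℝ)*u^2 := by ring
  -- union bound
  have hcompl : (μ Estarᶜ).toReal ≤
      2*((d1:ℝ)*(d2:ℝ))^2 * Real.exp (-(5/4)*(T0:ℝ)*u^2) := by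
    have h1 : μ Estarᶜ ≤ ∑ k : ((Fin d1 × Fin d2) × (Fin d1 × Fin d2)) × Bool, μ (Bad k) := by
      calc μ Estarᶜ ≤ μ (⋃ k, Bad k) := measure_mono hcover
        _ ≤ _ := by simpa using measure_biUnion_finset_le Finset.univ Bad
    have h2 : (μ Estarᶜ).toReal
        ≤ (∑ k : ((Fin d1 × Fin d2) × (Fin d1 × Fin d2)) × Bool, μ (Bad k)).toReal := by
      apply ENNReal.toReal_mono _ h1
      exact (ENNReal.sum_lt_top.mpr (fun k _ => measure_lt_top μ _)).ne
    rw [ENNReal.toReal_sum (fun k _ => measure_ne_top μ _)] at h2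
    have hcard2 : ((Finset.univ :
        Finset (((Fin d1 × Fin d2) × (Fin d1 × Fin d2)) × Bool)).card : ℝ)
        = 2*((d1:ℝ)*(d2:ℝ))^2 := by
      simp [Finset.card_univ]
      push_cast
      ring
    calc (μ Estarᶜ).toReal
        ≤ ∑ k : ((Fin d1 × Fin d2) × (Fin d1 × Fin d2)) × Bool, (μ (Bad k)).toReal := h2
      _ ≤ ∑ _k : ((Fin d1 × Fin d2) × (Fin d1 × Fin d2)) × Bool,
          Real.exp (-(5/4)*(T0:ℝ)*u^2) := Finset.sum_le_sum (fun k _ => hbad k)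
      _ = 2*((d1:ℝ)*(d2:ℝ))^2 * Real.exp (-(5/4)*(T0:ℝ)*u^2) := by
          rw [Finset.sum_const, nsmul_eq_mul, hcard2]
  -- tail numeric bound
  have htail : 2*((d1:ℝ)*(d2:ℝ))^2 * Real.exp (-(5/4)*(T0:ℝ)*u^2) ≤
      Real.exp (-((T0:ℝ) * u^2) / 4) := by
    have hu2pos : 0 < u^2 := pow_pos hu_pos 2
    have hlog : 2 * Real.log ((d1:ℝ)^2*(d2:ℝ)^2 + (d1:ℝ)*(d2:ℝ)) ≤ (T0:ℝ) * u^2 := by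
      rw [div_le_iff₀ hu2pos] at hT0_big
      linarith [hT0_big]
    have hNpos : (0:ℝ) < (d1:ℝ)^2*(d2:ℝ)^2 + (d1:ℝ)*(d2:ℝ) := by nlinarith
    have hexp2 : ((d1:ℝ)^2*(d2:ℝ)^2 + (d1:ℝ)*(d2:ℝ))^2 ≤ Real.exp ((T0:ℝ)*u^2) := by
      have he1 : Real.exp (2 * Real.log ((d1:ℝ)^2*(d2:ℝ)^2 + (d1:ℝ)*(d2:ℝ)))
          = ((d1:ℝ)^2*(d2:ℝ)^2 + (d1:ℝ)*(d2:ℝ))^2 := by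
        rw [two_mul, Real.exp_add, Real.exp_log hNpos]
        ring
      rw [← he1]
      exact Real.exp_le_exp.mpr hlog
    have h2N : 2*((d1:ℝ)*(d2:ℝ))^2 ≤ ((d1:ℝ)^2*(d2:ℝ)^2 + (d1:ℝ)*(d2:ℝ))^2 := by
      have hkey2 : ∀ a : ℝ, 1 ≤ a → 2*a^2 ≤ (a^2+a)^2 := fun a ha => by nlinarith
      have := hkey2 ((d1:ℝ)*(d2:ℝ)) hd1d2
      nlinarith [this]
    calc 2*((d1:ℝ)*(d2:ℝ))^2 * Real.exp (-(5/4)*(T0:ℝ)*u^2)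
        ≤ Real.exp ((T0:ℝ)*u^2) * Real.exp (-(5/4)*(T0:ℝ)*u^2) :=
          mul_le_mul_of_nonneg_right (le_trans h2N hexp2) (Real.exp_pos _).le
      _ = Real.exp (-((T0:ℝ)*u^2)/4) := by
          rw [← Real.exp_add]
          congr 1
          ring
  have hE1 : 1 - Real.exp (-((T0:ℝ) * u^2) / 4) ≤ (μ Estar).toReal := by
    have hsum : (μ Estar).toReal + (μ Estarᶜ).toReal = 1 := by
      rw [← ENNReal.toReal_add (measure_ne_top μ _) (measure_ne_top μ _),
        measure_add_measure_compl hEm]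
      simp
    linarith
  -- the good event implies the RSC event
  have hkey : Estar ⊆ {ω | ∀ Δ : Matrix (Fin d1) (Fin d2) ℝ,
      nucNorm (PbarPerp Δ) ≤ 3 * nucNorm (Pbar Δ) →
      (α0 / 4) * ∑ i, ∑ j, (Δ i j) ^ 2 ≤
        (1 / (2 * (T0 : ℝ))) * ∑ i, (frobInner (X i ω) Δ) ^ 2} := by
    intro ω hω
    simp only [hE_def, Set.mem_setOf_eq] at hω
    simp only [Set.mem_setOf_eq]
    intro Δ hΔ
    have hRE' := hRE Δ hΔ
    set D : Fin d1 × Fin d2 → ℝ := fun a => Δ a.1 a.2 with hD_def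
    clear_value D
    have hSrw : ∑ a : Fin d1 × Fin d2, (D a)^2 = ∑ i, ∑ j, (Δ i j)^2 := by
      simp only [hD_def]
      rw [Fintype.sum_prod_type]
    have hSnn : 0 ≤ ∑ a : Fin d1 × Fin d2, (D a)^2 :=
      Finset.sum_nonneg (fun a _ => sq_nonneg _)
    have hfrob : ∀ i : Fin T0, frobInner (X i ω) Δ
        = ∑ a : Fin d1 × Fin d2, X i ω a.1 a.2 * D a := by
      intro i
      simp only [frobInner, hD_def]
      rw [Fintype.sum_prod_type]
    have h1 : ∀ i : Fin T0, (frobInner (X i ω) Δ)^2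
        = ∑ e : (Fin d1 × Fin d2) × (Fin d1 × Fin d2), D e.1 * D e.2 * P i e ω := by
      intro i
      rw [Fintype.sum_prod_type, hfrob i, sq, Finset.sum_mul_sum]
      refine Finset.sum_congr rfl (fun a _ => Finset.sum_congr rfl (fun b _ => ?_))
      simp only [hP_def]
      ring
    have hQ : ∑ i, (frobInner (X i ω) Δ)^2
        = ∑ e : (Fin d1 × Fin d2) × (Fin d1 × Fin d2), D e.1 * D e.2 * G e ω := by
      calc ∑ i, (frobInner (X i ω) Δ)^2
          = ∑ i, ∑ e : (Fin d1 × Fin d2) × (Fin d1 × Fin d2), D e.1 * D e.2 * P i e ω :=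
            Finset.sum_congr rfl (fun i _ => h1 i)
        _ = ∑ e : (Fin d1 × Fin d2) × (Fin d1 × Fin d2), ∑ i : Fin T0,
            D e.1 * D e.2 * P i e ω := Finset.sum_comm
        _ = ∑ e : (Fin d1 × Fin d2) × (Fin d1 × Fin d2), D e.1 * D e.2 * G e ω := by
            refine Finset.sum_congr rfl (fun e _ => ?_)
            simp only [hG_def]
            rw [Finset.mul_sum]
    have hmid : α0 * ∑ a : Fin d1 × Fin d2, (D a)^2
        ≤ ∑ e : (Fin d1 × Fin d2) × (Fin d1 × Fin d2), D e.1 * D e.2 * m e := by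
      have h2 : ∑ e : (Fin d1 × Fin d2) × (Fin d1 × Fin d2), D e.1 * D e.2 * m e
          = ∑ a : Fin d1 × Fin d2, ∑ b : Fin d1 × Fin d2,
            Δ a.1 a.2 * Sig a b * Δ b.1 b.2 := by
        rw [Fintype.sum_prod_type]
        refine Finset.sum_congr rfl (fun a _ => Finset.sum_congr rfl (fun b _ => ?_))
        simp only [hD_def, hm_def]
        ring
      rw [hSrw, h2]
      exact hRE'
    have hdev : |∑ e : (Fin d1 × Fin d2) × (Fin d1 × Fin d2),
        D e.1 * D e.2 * (G e ω - (T0:ℝ) * m e)|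
        ≤ (T0:ℝ) * (α0/2) * ∑ a : Fin d1 × Fin d2, (D a)^2 := by
      have h3 : |∑ e : (Fin d1 × Fin d2) × (Fin d1 × Fin d2),
          D e.1 * D e.2 * (G e ω - (T0:ℝ)*m e)|
          ≤ ∑ e : (Fin d1 × Fin d2) × (Fin d1 × Fin d2),
            |D e.1 * D e.2| * ((T0:ℝ) * th e) := by
        refine le_trans (Finset.abs_sum_le_sum_abs _ _)
          (Finset.sum_le_sum (fun e _ => ?_))
        rw [abs_mul]
        exact mul_le_mul_of_nonneg_left (hω e) (abs_nonneg _)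
      have h5 : ∑ e : (Fin d1 × Fin d2) × (Fin d1 × Fin d2), |D e.1 * D e.2| * th e
          ≤ (α0/2) * ∑ a : Fin d1 × Fin d2, (D a)^2 := by
        have hcs := Real.sum_mul_le_sqrt_mul_sqrt Finset.univ
          (fun e : (Fin d1 × Fin d2) × (Fin d1 × Fin d2) => |D e.1 * D e.2|) th
        have h6 : ∑ e : (Fin d1 × Fin d2) × (Fin d1 × Fin d2), |D e.1 * D e.2|^2
            = (∑ a : Fin d1 × Fin d2, (D a)^2)^2 := by
          calc ∑ e : (Fin d1 × Fin d2) × (Fin d1 × Fin d2), |D e.1 * D e.2|^2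
              = ∑ a : Fin d1 × Fin d2, ∑ b : Fin d1 × Fin d2, (D a)^2 * (D b)^2 := by
                rw [Fintype.sum_prod_type]
                refine Finset.sum_congr rfl (fun a _ => Finset.sum_congr rfl (fun b _ => ?_))
                rw [sq_abs]
                ring
            _ = (∑ a : Fin d1 × Fin d2, (D a)^2) * (∑ b : Fin d1 × Fin d2, (D b)^2) :=
                (Finset.sum_mul_sum _ _ _ _).symm
            _ = (∑ a : Fin d1 × Fin d2, (D a)^2)^2 := (sq _).symm
        have h7 : Real.sqrt (∑ e : (Fin d1 × Fin d2) × (Fin d1 × Fin d2), (th e)^2)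
            ≤ α0/2 := by
          have h8 := Real.sqrt_le_sqrt hst2
          rwa [show α0^2/4 = (α0/2)^2 by ring, Real.sqrt_sq (by linarith [hα0])] at h8
        have h9 : Real.sqrt (∑ e : (Fin d1 × Fin d2) × (Fin d1 × Fin d2),
            |D e.1 * D e.2|^2) = ∑ a : Fin d1 × Fin d2, (D a)^2 := by
          rw [h6, Real.sqrt_sq hSnn]
        calc ∑ e : (Fin d1 × Fin d2) × (Fin d1 × Fin d2), |D e.1 * D e.2| * th e
            ≤ Real.sqrt (∑ e : (Fin d1 × Fin d2) × (Fin d1 × Fin d2), |D e.1 * D e.2|^2)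
              * Real.sqrt (∑ e : (Fin d1 × Fin d2) × (Fin d1 × Fin d2), (th e)^2) := hcs
          _ = (∑ a : Fin d1 × Fin d2, (D a)^2)
              * Real.sqrt (∑ e : (Fin d1 × Fin d2) × (Fin d1 × Fin d2), (th e)^2) := by
              rw [h9]
          _ ≤ (∑ a : Fin d1 × Fin d2, (D a)^2) * (α0/2) :=
              mul_le_mul_of_nonneg_left h7 hSnn
          _ = (α0/2) * ∑ a : Fin d1 × Fin d2, (D a)^2 := mul_comm _ _
      calc |∑ e : (Fin d1 × Fin d2) × (Fin d1 × Fin d2),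
            D e.1 * D e.2 * (G e ω - (T0:ℝ)*m e)|
          ≤ ∑ e : (Fin d1 × Fin d2) × (Fin d1 × Fin d2),
            |D e.1 * D e.2| * ((T0:ℝ) * th e) := h3
        _ = (T0:ℝ) * ∑ e : (Fin d1 × Fin d2) × (Fin d1 × Fin d2),
            |D e.1 * D e.2| * th e := by
            rw [Finset.mul_sum]
            exact Finset.sum_congr rfl (fun e _ => by ring)
        _ ≤ (T0:ℝ) * ((α0/2) * ∑ a : Fin d1 × Fin d2, (D a)^2) :=
            mul_le_mul_of_nonneg_left h5 hT0R.le
        _ = (T0:ℝ) * (α0/2) * ∑ a : Fin d1 × Fin d2, (D a)^2 := by ring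
    have hsplit : ∑ e : (Fin d1 × Fin d2) × (Fin d1 × Fin d2), D e.1 * D e.2 * G e ω
        = (∑ e : (Fin d1 × Fin d2) × (Fin d1 × Fin d2),
            D e.1 * D e.2 * (G e ω - (T0:ℝ)*m e))
          + (T0:ℝ) * ∑ e : (Fin d1 × Fin d2) × (Fin d1 × Fin d2), D e.1 * D e.2 * m e := by
      rw [Finset.mul_sum, ← Finset.sum_add_distrib]
      exact Finset.sum_congr rfl (fun e _ => by ring)
    have hlow : (T0:ℝ) * (α0/2) * ∑ a : Fin d1 × Fin d2, (D a)^2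
        ≤ ∑ e : (Fin d1 × Fin d2) × (Fin d1 × Fin d2), D e.1 * D e.2 * G e ω := by
      have h9 := (abs_le.mp hdev).1
      have h10 := mul_le_mul_of_nonneg_left hmid hT0R.le
      have h11 : (T0:ℝ) * (α0 * ∑ a : Fin d1 × Fin d2, (D a)^2)
          = 2*((T0:ℝ)*(α0/2)* ∑ a : Fin d1 × Fin d2, (D a)^2) := by ring
      rw [hsplit]
      linarith [h9, h10, h11]
    rw [← hSrw, hQ]
    have h12 : 1/(2*(T0:ℝ)) * ((T0:ℝ)*(α0/2)* ∑ a : Fin d1 × Fin d2, (D a)^2)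
        = α0/4 * ∑ a : Fin d1 × Fin d2, (D a)^2 := by
      field_simp
      ring
    calc α0/4 * ∑ a : Fin d1 × Fin d2, (D a)^2
        = 1/(2*(T0:ℝ)) * ((T0:ℝ)*(α0/2)* ∑ a : Fin d1 × Fin d2, (D a)^2) := h12.symm
      _ ≤ 1/(2*(T0:ℝ)) * ∑ e : (Fin d1 × Fin d2) × (Fin d1 × Fin d2),
          D e.1 * D e.2 * G e ω :=
          mul_le_mul_of_nonneg_left hlow (by positivity)
  calc 1 - Real.exp (-((T0:ℝ) * u^2) / 4) ≤ (μ Estar).toReal := hE1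
    _ ≤ _ := ENNReal.toReal_mono (measure_ne_top μ _) (measure_mono hkey)
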